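/- Let g : X → ℝ be a nonnegative bounded Baire class 1 function on a Polish space X such that the upper regularization of g equals the upper regularization of ĝ − g (where ĝ denotes the upper regularization of g). Then g is identically zero. -/

import Mathlib

open Ordinal Set

noncomputable section

/-- Parity of an ordinal: `a = γ + n` with `γ` limit, `n < ω`; even iff `n` is even. -/
def OrdEven (a : Ordinal) : Prop := a % 2 = 0

/-- Upper semicontinuity. -/
def USC {X : Type} [TopologicalSpace X] (f : X → ℝ) : Prop :=
  ∀ r : ℝ, IsOpen (f ⁻¹' Set.Iio r)

/-- The least ordinal where two transfinite sequences differ. -/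
def dOrd (f g : Ordinal → ℝ) : Ordinal := sInf {a | f a ≠ g a}

/-- The alternating lexicographical order on transfinite sequences of reals. -/
def AltLex (f g : Ordinal → ℝ) : Prop :=
  f ≠ g ∧ ((OrdEven (dOrd f g) ∧ f (dOrd f g) < g (dOrd f g)) ∨
    (¬ OrdEven (dOrd f g) ∧ g (dOrd f g) < f (dOrd f g)))

/-- `f` encodes a strictly decreasing countable transfinite sequence in `[0,1]`
with last element `0` at index `ξ` (padded with `0` beyond `ξ`). -/
def IsDSeqLen (f : Ordinal → ℝ) (ξ : Ordinal) : Prop :=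
  ξ < (Cardinal.aleph 1).ord ∧ (∀ a, f a ∈ Set.Icc (0:ℝ) 1) ∧
  (∀ a b, a < b → b ≤ ξ → f b < f a) ∧ (∀ a, ξ ≤ a → f a = 0)

/-- Membership in `[0,1]^{<ω₁}_{↘0}`. -/
def IsDSeq (f : Ordinal → ℝ) : Prop := ∃ ξ, IsDSeqLen f ξ

/-- The upper regularization of a bounded function. -/
def upperReg {X : Type} [TopologicalSpace X] (f : X → ℝ) : X → ℝ :=
  fun x => sInf {y : ℝ | ∃ g : X → ℝ, USC g ∧ (∀ z, f z ≤ g z) ∧ g x = y}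

/-- Baire class 1: a pointwise limit of continuous functions. -/
def BaireClass1 {X : Type} [TopologicalSpace X] (f : X → ℝ) : Prop :=
  ∃ F : ℕ → X → ℝ, (∀ n, Continuous (F n)) ∧
    ∀ x, Filter.Tendsto (fun n => F n x) Filter.atTop (nhds (f x))

section Aux

variable {X : Type} [TopologicalSpace X]

lemma usc_const (c : ℝ) : USC (fun _ : X => c) := by
  intro r
  by_cases h : c < r
  · have : (fun _ : X => c) ⁻¹' Set.Iio r = Set.univ := by
      ext x; simp [h]
    rw [this]; exact isOpen_univ
  · have : (fun _ : X => c) ⁻¹' Set.Iio r = ∅ := by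
      ext x; simp [h]
    rw [this]; exact isOpen_empty

lemma le_upperReg (f : X → ℝ) {M : ℝ} (hM : ∀ z, f z ≤ M) (x : X) :
    f x ≤ upperReg f x := by
  refine le_csInf ⟨M, (fun _ => M), usc_const M, hM, rfl⟩ ?_
  rintro y ⟨G, _, hge, rfl⟩
  exact hge x

lemma upperReg_le (f : X → ℝ) {G : X → ℝ} (hG : USC G) (hge : ∀ z, f z ≤ G z) (x : X) :
    upperReg f x ≤ G x := by
  refine csInf_le ⟨f x, ?_⟩ ⟨G, hG, hge, rfl⟩
  rintro y ⟨G', _, hge', rfl⟩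
  exact hge' x

lemma upperReg_le_const (f : X → ℝ) {M : ℝ} (hM : ∀ z, f z ≤ M) (x : X) :
    upperReg f x ≤ M := upperReg_le f (usc_const M) hM x

/-- If `t < upperReg f x`, every open neighborhood of `x` contains a point where `f > t`. -/
lemma exists_gt_of_lt_upperReg {f : X → ℝ} {M : ℝ} (hM : ∀ z, f z ≤ M) {x : X} {t : ℝ}
    (ht : t < upperReg f x) {U : Set X} (hUo : IsOpen U) (hxU : x ∈ U) :
    ∃ z ∈ U, t < f z := by
  classical
  by_contra hcon
  push_neg at hcon
  set G : X → ℝ := fun z => if z ∈ U then t else max M t with hGdef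
  have hG : USC G := by
    intro r
    rcases le_or_gt r t with h1 | h1
    · have : G ⁻¹' Set.Iio r = ∅ := by
        ext z
        simp only [Set.mem_preimage, Set.mem_Iio, Set.mem_empty_iff_false, iff_false, not_lt,
          hGdef]
        split_ifs
        · exact h1
        · exact le_trans h1 (le_max_right M t)
      rw [this]; exact isOpen_empty
    · rcases le_or_gt r (max M t) with h2 | h2
      · have : G ⁻¹' Set.Iio r = U := by
          ext z
          simp only [Set.mem_preimage, Set.mem_Iio, hGdef]
          split_ifs with hz
          · simp [hz, h1]
          · constructor
            · intro hlt; exact absurd hlt (not_lt.2 h2)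
            · intro hz'; exact absurd hz' hz
        rw [this]; exact hUo
      · have : G ⁻¹' Set.Iio r = Set.univ := by
          ext z
          simp only [Set.mem_preimage, Set.mem_Iio, Set.mem_univ, iff_true, hGdef]
          split_ifs
          · exact lt_of_le_of_lt (le_max_right M t) h2
          · exact h2
        rw [this]; exact isOpen_univ
  have hge : ∀ z, f z ≤ G z := by
    intro z
    simp only [hGdef]
    split_ifs with hz
    · exact hcon z hz
    · exact le_trans (hM z) (le_max_left M t)
  have hle := upperReg_le f hG hge x
  simp only [hGdef, if_pos hxU] at hle
  linarith

end Aux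

theorem stmt_7 (X : Type) [TopologicalSpace X] [PolishSpace X] (g : X → ℝ)
    (hnn : ∀ x, 0 ≤ g x) (hbd : ∃ M, ∀ x, |g x| ≤ M) (hb1 : BaireClass1 g)
    (heq : upperReg g = upperReg (fun x => upperReg g x - g x)) :
    ∀ x, g x = 0 := by
  obtain ⟨M, hM⟩ := hbd
  have hMg : ∀ z, g z ≤ M := fun z => (abs_le.1 (hM z)).2
  have hgle : ∀ x, g x ≤ upperReg g x := le_upperReg g hMg
  have hG0le : ∀ x, upperReg g x ≤ M := upperReg_le_const g hMg
  have hhle : ∀ z, upperReg g z - g z ≤ M := fun z => by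
    have := hnn z; have := hG0le z; linarith
  by_contra hcon
  push_neg at hcon
  obtain ⟨x₀, hx₀⟩ := hcon
  have hgx₀ : 0 < g x₀ := lt_of_le_of_ne (hnn x₀) (Ne.symm hx₀)
  have hbdd : BddAbove (Set.range (upperReg g)) := by
    refine ⟨M, ?_⟩; rintro y ⟨x, rfl⟩; exact hG0le x
  set s := sSup (Set.range (upperReg g)) with hs
  have hG0s : ∀ x, upperReg g x ≤ s := fun x => le_csSup hbdd ⟨x, rfl⟩
  have hspos : 0 < s := lt_of_lt_of_le (lt_of_lt_of_le hgx₀ (hgle x₀)) (hG0s x₀)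
  set t := 3 * s / 4 with hts
  set Gset := {x | t < upperReg g x} with hGset
  have hGne : Gset.Nonempty := by
    obtain ⟨y, hymem, hy⟩ :=
      exists_lt_of_lt_csSup (⟨upperReg g x₀, ⟨x₀, rfl⟩⟩ :
        (Set.range (upperReg g)).Nonempty) (show t < s by rw [hts]; linarith)
    obtain ⟨x, rfl⟩ := hymem
    exact ⟨x, hy⟩
  set K := closure Gset with hK
  have hKcl : IsClosed K := isClosed_closure
  -- key oscillation claim
  have key : ∀ x ∈ K, ∀ U : Set X, IsOpen U → x ∈ U →
      (∃ y ∈ K ∩ U, g y < s - t) ∧ (∃ z ∈ K ∩ U, t < g z) := by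
    intro x hx U hUo hxU
    obtain ⟨x', hx'⟩ := mem_closure_iff.1 hx U hUo hxU
    have hx'U : x' ∈ U := hx'.1
    have hx'G : t < upperReg g x' := hx'.2
    constructor
    · have hhx' : t < upperReg (fun z => upperReg g z - g z) x' := by
        rw [← heq]; exact hx'G
      obtain ⟨y, hyU, hyt⟩ := exists_gt_of_lt_upperReg hhle hhx' hUo hx'U
      have hyG : y ∈ Gset := by
        have := hnn y
        simp only [hGset, Set.mem_setOf_eq]
        linarith
      refine ⟨y, ⟨subset_closure hyG, hyU⟩, ?_⟩
      have := hG0s y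
      linarith
    · obtain ⟨z, hzU, hzt⟩ := exists_gt_of_lt_upperReg hMg hx'G hUo hx'U
      have hzG : z ∈ Gset := by
        simp only [hGset, Set.mem_setOf_eq]
        exact lt_of_lt_of_le hzt (hgle z)
      exact ⟨z, ⟨subset_closure hzG, hzU⟩, hzt⟩
  -- Baire category argument on K
  obtain ⟨F, hFc, hFlim⟩ := hb1
  haveI : PolishSpace K := hKcl.polishSpace
  letI := TopologicalSpace.upgradeIsCompletelyMetrizable K
  haveI : Nonempty K := ⟨⟨hGne.choose, subset_closure hGne.choose_spec⟩⟩
  set ε := s / 10 with hε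
  have hεpos : 0 < ε := by rw [hε]; linarith
  set A : ℕ → Set K := fun N => {x | ∀ m ≥ N, ∀ n ≥ N, |F m x.1 - F n x.1| ≤ ε} with hA
  have hAcl : ∀ N, IsClosed (A N) := by
    intro N
    have hrw : A N = ⋂ m, ⋂ (_ : N ≤ m), ⋂ n, ⋂ (_ : N ≤ n),
        {x : K | |F m x.1 - F n x.1| ≤ ε} := by
      ext x
      simp only [hA, Set.mem_setOf_eq, Set.mem_iInter]
    rw [hrw]
    refine isClosed_iInter fun m => isClosed_iInter fun _ =>
      isClosed_iInter fun n => isClosed_iInter fun _ => ?_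
    exact isClosed_le
      (((hFc m).comp continuous_subtype_val).sub ((hFc n).comp continuous_subtype_val)).abs
      continuous_const
  have hcover : (⋃ N, A N) = Set.univ := by
    ext x
    simp only [Set.mem_iUnion, Set.mem_univ, iff_true]
    have hc : CauchySeq (fun n => F n x.1) := (hFlim x.1).cauchySeq
    obtain ⟨N, hN⟩ := Metric.cauchySeq_iff.1 hc ε hεpos
    exact ⟨N, fun m hm n hn => le_of_lt (by simpa [Real.dist_eq] using hN m hm n hn)⟩
  obtain ⟨N, hN⟩ := nonempty_interior_of_iUnion_of_closed hAcl hcover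
  obtain ⟨x, hx⟩ := hN
  set W : Set K := interior (A N) ∩ (fun y : K => F N y.1) ⁻¹' Metric.ball (F N x.1) ε with hW
  have hWo : IsOpen W :=
    isOpen_interior.inter (Metric.isOpen_ball.preimage ((hFc N).comp continuous_subtype_val))
  have hxW : x ∈ W := ⟨hx, by simp [Metric.mem_ball, dist_self, hεpos]⟩
  obtain ⟨U, hUo, hUeq⟩ := isOpen_induced_iff.1 hWo
  have hxU : (x : X) ∈ U := by
    have : x ∈ Subtype.val ⁻¹' U := by rw [hUeq]; exact hxW
    exact this
  obtain ⟨⟨y, ⟨hyK, hyU⟩, hys⟩, ⟨z, ⟨hzK, hzU⟩, hzt⟩⟩ := key x.1 x.2 U hUo hxU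
  have limbd : ∀ w : K, w ∈ A N → |g w.1 - F N w.1| ≤ ε := by
    intro w hw
    have htd : Filter.Tendsto (fun m => |F m w.1 - F N w.1|) Filter.atTop
        (nhds (|g w.1 - F N w.1|)) := ((hFlim w.1).sub tendsto_const_nhds).abs
    exact le_of_tendsto htd (Filter.eventually_atTop.2 ⟨N, fun m hm => hw m hm N le_rfl⟩)
  have hyW : (⟨y, hyK⟩ : K) ∈ W := by rw [← hUeq]; exact hyU
  have hzW : (⟨z, hzK⟩ : K) ∈ W := by rw [← hUeq]; exact hzU
  have hyA : (⟨y, hyK⟩ : K) ∈ A N := interior_subset hyW.1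
  have hzA : (⟨z, hzK⟩ : K) ∈ A N := interior_subset hzW.1
  have h1 : |g y - F N y| ≤ ε := limbd _ hyA
  have h2 : |g z - F N z| ≤ ε := limbd _ hzA
  have h3 : |F N y - F N x.1| < ε := by
    have := hyW.2; simpa [Real.dist_eq] using this
  have h4 : |F N z - F N x.1| < ε := by
    have := hzW.2; simpa [Real.dist_eq] using this
  have e1 := abs_le.1 h1
  have e2 := abs_le.1 h2
  have e3 := abs_lt.1 h3
  have e4 := abs_lt.1 h4
  have : g z - g y ≤ 4 * ε := by
    obtain ⟨e1a, e1b⟩ := e1; obtain ⟨e2a, e2b⟩ := e2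
    obtain ⟨e3a, e3b⟩ := e3; obtain ⟨e4a, e4b⟩ := e4
    linarith
  rw [hε] at this
  rw [hts] at hys hzt
  linarith
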